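/- Consider the Game of Graph Nim on the graph H₁ (path A–B–C–D with edges AB, BC, CD, plus a disjoint edge EF), with w(AB), w(CD), w(EF) positive. If the bitwise XOR of w(AB), w(CD), w(EF) is nonzero and the highest-order bit in which this XOR is set is also set in w(AB) or in w(CD), then the configuration is winning for the first player. Moreover, if w(BC) ≥ 1 and the XOR of w(AB), w(CD), w(EF) is zero, the configuration is also winning for the first player. -/

import Mathlib

namespace GraphNim

variable {V E : Type} [Fintype E]

/-- A legal move in the Game of Graph Nim: choose a vertex `v` and weakly decrease
the weights of edges incident to `v` (all other edges unchanged), strictly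
decreasing the total weight. -/
def Move (inc : V → E → Prop) (w w' : E → ℕ) : Prop :=
  ∃ v : V, (∀ e, w' e ≤ w e) ∧ (∀ e, ¬ inc v e → w' e = w e) ∧
    (∑ e, w' e) < (∑ e, w e)

/-- A configuration is losing for the player to move: every legal move leads to a
non-losing configuration (the all-zero configuration is vacuously losing). -/
def Losing (inc : V → E → Prop) (w : E → ℕ) : Prop :=
  ∀ w', Move inc w w' → ¬ Losing inc w'
termination_by ∑ e, w e
decreasing_by
  rename_i h
  obtain ⟨v, _, _, h3⟩ := h
  exact h3

/-- A configuration is winning for the player to move: some legal move leads to a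
losing configuration. -/
def Winning (inc : V → E → Prop) (w : E → ℕ) : Prop :=
  ∃ w', Move inc w w' ∧ Losing inc w'

end GraphNim

open GraphNim

/-- Endpoints of the edges of the graph `H₁` (path `A–B–C–D` plus a disjoint edge
`EF`): vertices `A = 0, …, F = 5`, edges `AB = 0, BC = 1, CD = 2, EF = 3`. -/
def h1Ends : Fin 4 → Fin 6 × Fin 6
  | 0 => (0, 1)
  | 1 => (1, 2)
  | 2 => (2, 3)
  | 3 => (4, 5)

def h1Inc (v : Fin 6) (e : Fin 4) : Prop := (h1Ends e).1 = v ∨ (h1Ends e).2 = v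

section Aux

lemma testBit_log2_self {x : ℕ} (hx : x ≠ 0) : x.testBit (Nat.log2 x) = true := by
  have h1 : 2 ^ Nat.log2 x ≤ x := (Nat.le_log2 hx).mp le_rfl
  have h2 : x < 2 ^ (Nat.log2 x + 1) := (Nat.log2_lt hx).mp (Nat.lt_succ_self _)
  have hd : x / 2 ^ Nat.log2 x = 1 := by
    have hlo : 1 ≤ x / 2 ^ Nat.log2 x := (Nat.one_le_div_iff (Nat.pow_pos two_pos)).mpr h1
    have hhi : x / 2 ^ Nat.log2 x < 2 := by
      rw [Nat.div_lt_iff_lt_mul (Nat.pow_pos two_pos)]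
      calc x < 2 ^ (Nat.log2 x + 1) := h2
      _ = 2 ^ Nat.log2 x * 2 := by ring
      _ ≤ 2 * 2 ^ Nat.log2 x := by omega
    omega
  rw [Nat.testBit_eq_decide_div_mod_eq, hd]
  decide

lemma testBit_false_of_log2_lt {x j : ℕ} (hx : x ≠ 0) (hj : Nat.log2 x < j) :
    x.testBit j = false :=
  Nat.testBit_lt_two_pow ((Nat.log2_lt hx).mp hj)

lemma xor_log2_lt {a x : ℕ} (hx : x ≠ 0) (hb : a.testBit (Nat.log2 x) = true) :
    a ^^^ x < a := by
  apply Nat.lt_of_testBit (Nat.log2 x)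
  · simp [Nat.testBit_xor, hb, testBit_log2_self hx]
  · exact hb
  · intro j hj
    simp [Nat.testBit_xor, testBit_false_of_log2_lt hx hj]

lemma xor_left_comm' (a b c : ℕ) : a ^^^ (b ^^^ c) = b ^^^ (a ^^^ c) := by
  rw [← Nat.xor_assoc, Nat.xor_comm a b, Nat.xor_assoc]

lemma xor3_a (a c d : ℕ) : a ^^^ (a ^^^ c ^^^ d) = c ^^^ d := by
  rw [Nat.xor_assoc a c d, xor_cancel_left]

lemma xor3_c (a c d : ℕ) : c ^^^ (a ^^^ c ^^^ d) = a ^^^ d := by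
  rw [Nat.xor_assoc a c d, xor_left_comm' c a, xor_cancel_left]

lemma xor3_d (a c d : ℕ) : d ^^^ (a ^^^ c ^^^ d) = a ^^^ c := by
  rw [Nat.xor_comm (a ^^^ c) d, xor_cancel_left]

lemma xor3_ne {a c d a' c' d' : ℕ} (h : a ^^^ c ^^^ d = 0)
    (hc : (a' < a ∧ c' = c ∧ d' = d) ∨ (a' = a ∧ c' < c ∧ d' = d) ∨
      (a' = a ∧ c' = c ∧ d' < d)) :
    a' ^^^ c' ^^^ d' ≠ 0 := by
  intro h0
  have ha : a = c ^^^ d := by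
    have h' := xor_eq_zero_iff.mp h
    rw [← h', Nat.xor_comm a c, xor_cancel_left]
  have ha' : a' = c' ^^^ d' := by
    have h' := xor_eq_zero_iff.mp h0
    rw [← h', Nat.xor_comm a' c', xor_cancel_left]
  rcases hc with ⟨h1, h2, h3⟩ | ⟨h1, h2, h3⟩ | ⟨h1, h2, h3⟩
  · rw [ha', h2, h3, ← ha] at h1; omega
  · rw [h1, ha, h3] at ha'
    have : c = c' := by have := congrArg (· ^^^ d) ha'; simpa only [xor_cancel_right] using this
    omega
  · rw [h1, ha, h2] at ha'
    have : d = d' := by have := congrArg (c ^^^ ·) ha'; simpa only [xor_cancel_left] using this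
    omega

end Aux

instance (v : Fin 6) (e : Fin 4) : Decidable (h1Inc v e) := by
  unfold h1Inc; infer_instance

section H1

lemma not_losing_of_move {inc : Fin 6 → Fin 4 → Prop} {w w' : Fin 4 → ℕ}
    (hm : Move inc w w') (hL : Losing inc w') : ¬ Losing inc w := by
  intro h
  rw [Losing] at h
  exact h w' hm hL

/-- A single-edge nim move: decrease edge `j` to value `n` via vertex `v`. -/
lemma move_single {v : Fin 6} {j : Fin 4} (hvj : h1Inc v j) (w : Fin 4 → ℕ) {n : ℕ}
    (hn : n < w j) : Move h1Inc w (Function.update w j n) := by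
  refine ⟨v, ?_, ?_, ?_⟩
  · intro e
    rcases eq_or_ne e j with rfl | he
    · simp [Function.update_self]; omega
    · simp [Function.update_of_ne he]
  · intro e he
    have : e ≠ j := fun h => he (h ▸ hvj)
    simp [Function.update_of_ne this]
  · rw [Fin.sum_univ_four, Fin.sum_univ_four]
    fin_cases j <;> simp_all [Function.update] <;> omega

lemma not_losing_aux (w : Fin 4 → ℕ) (h1 : w 1 = 0) (hne : w 0 ^^^ w 2 ^^^ w 3 ≠ 0)
    (IH : ∀ u : Fin 4 → ℕ, (∑ e, u e) < (∑ e, w e) → u 1 = 0 →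
      u 0 ^^^ u 2 ^^^ u 3 = 0 → Losing h1Inc u) :
    ¬ Losing h1Inc w := by
  set x := w 0 ^^^ w 2 ^^^ w 3 with hx
  have ht : x.testBit (Nat.log2 x) = true := testBit_log2_self hne
  have hone : (w 0).testBit (Nat.log2 x) = true ∨ (w 2).testBit (Nat.log2 x) = true ∨
      (w 3).testBit (Nat.log2 x) = true := by
    by_contra hcon
    push_neg at hcon
    obtain ⟨c0, c2, c3⟩ := hcon
    rw [hx, Nat.testBit_xor, Nat.testBit_xor] at ht
    rw [← hx] at ht
    simp [Bool.eq_false_iff.mpr c0, Bool.eq_false_iff.mpr c2, Bool.eq_false_iff.mpr c3] at ht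
  rcases hone with hb | hb | hb
  · have hlt : w 0 ^^^ x < w 0 := xor_log2_lt hne hb
    have hmv := move_single (v := 0) (j := 0) (by decide) w hlt
    refine not_losing_of_move hmv (IH _ ?_ ?_ ?_)
    · exact hmv.choose_spec.2.2
    · simp [Function.update, h1]
    · simp only [Function.update]
      simp [hx, xor3_a]
  · have hlt : w 2 ^^^ x < w 2 := xor_log2_lt hne hb
    have hmv := move_single (v := 3) (j := 2) (by decide) w hlt
    refine not_losing_of_move hmv (IH _ ?_ ?_ ?_)
    · exact hmv.choose_spec.2.2
    · simp [Function.update, h1]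
    · simp only [Function.update]
      simp [hx, xor3_c]
  · have hlt : w 3 ^^^ x < w 3 := xor_log2_lt hne hb
    have hmv := move_single (v := 4) (j := 3) (by decide) w hlt
    refine not_losing_of_move hmv (IH _ ?_ ?_ ?_)
    · exact hmv.choose_spec.2.2
    · simp [Function.update, h1]
    · simp only [Function.update]
      simp [hx, xor3_d]

lemma losing_h1_aux : ∀ n : ℕ, ∀ w : Fin 4 → ℕ, (∑ e, w e) ≤ n → w 1 = 0 →
    w 0 ^^^ w 2 ^^^ w 3 = 0 → Losing h1Inc w := by
  intro n
  induction n using Nat.strong_induction_on with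
  | _ n IH =>
    intro w hn h1 hx
    rw [Losing]
    intro w' hmv
    obtain ⟨v, hle, heq, hlt⟩ := hmv
    have h1' : w' 1 = 0 := Nat.le_zero.mp (h1 ▸ hle 1)
    have hsum : (∑ e, w' e) < n := lt_of_lt_of_le hlt hn
    have hcase : (w' 0 < w 0 ∧ w' 2 = w 2 ∧ w' 3 = w 3) ∨
        (w' 0 = w 0 ∧ w' 2 < w 2 ∧ w' 3 = w 3) ∨
        (w' 0 = w 0 ∧ w' 2 = w 2 ∧ w' 3 < w 3) := by
      rw [Fin.sum_univ_four, Fin.sum_univ_four] at hlt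
      fin_cases v
      · have e1 := heq 1 (by decide)
        have e2 := heq 2 (by decide)
        have e3 := heq 3 (by decide)
        left; omega
      · have e2 := heq 2 (by decide)
        have e3 := heq 3 (by decide)
        left; omega
      · have e0 := heq 0 (by decide)
        have e3 := heq 3 (by decide)
        right; left; omega
      · have e0 := heq 0 (by decide)
        have e1 := heq 1 (by decide)
        have e3 := heq 3 (by decide)
        right; left; omega
      · have e0 := heq 0 (by decide)
        have e1 := heq 1 (by decide)
        have e2 := heq 2 (by decide)
        right; right; omega
      · have e0 := heq 0 (by decide)
        have e1 := heq 1 (by decide)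
        have e2 := heq 2 (by decide)
        right; right; omega
    have hne : w' 0 ^^^ w' 2 ^^^ w' 3 ≠ 0 := xor3_ne hx hcase
    exact not_losing_aux w' h1' hne (fun u hu h1u hxu =>
      IH (∑ e, w' e) hsum u (le_of_lt hu) h1u hxu)

lemma losing_h1 (w : Fin 4 → ℕ) (h1 : w 1 = 0) (hx : w 0 ^^^ w 2 ^^^ w 3 = 0) :
    Losing h1Inc w :=
  losing_h1_aux (∑ e, w e) w le_rfl h1 hx

end H1

/-- On `H₁` with `w(AB), w(CD), w(EF)` positive: if the XOR of `w(AB), w(CD),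
w(EF)` is nonzero and its highest-order set bit (at index `log₂` of the XOR) is
set in `w(AB)` or in `w(CD)`, the configuration is winning; and if `w(BC) ≥ 1`
and the XOR is zero, the configuration is also winning. -/
theorem h1_winning_xor (w : Fin 4 → ℕ)
    (hAB : 0 < w 0) (hCD : 0 < w 2) (hEF : 0 < w 3) :
    ((w 0 ^^^ w 2 ^^^ w 3 ≠ 0 ∧
        ((w 0).testBit (Nat.log2 (w 0 ^^^ w 2 ^^^ w 3)) = true ∨
          (w 2).testBit (Nat.log2 (w 0 ^^^ w 2 ^^^ w 3)) = true)) →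
      Winning h1Inc w) ∧
    ((1 ≤ w 1 ∧ w 0 ^^^ w 2 ^^^ w 3 = 0) → Winning h1Inc w) := by
  constructor
  · rintro ⟨hne, hb | hb⟩
    · -- move at B: set edge 1 to 0 and edge 0 to w2 ^^^ w3
      have hlt : w 0 ^^^ (w 0 ^^^ w 2 ^^^ w 3) < w 0 := xor_log2_lt hne hb
      rw [xor3_a] at hlt
      refine ⟨Function.update (Function.update w 1 0) 0 (w 2 ^^^ w 3), ⟨1, ?_, ?_, ?_⟩, ?_⟩
      · intro e
        fin_cases e <;> simp [Function.update] <;> omega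
      · intro e he
        fin_cases e
        · exact absurd (by decide : h1Inc 1 0) he
        · exact absurd (by decide : h1Inc 1 1) he
        · simp [Function.update]
        · simp [Function.update]
      · rw [Fin.sum_univ_four, Fin.sum_univ_four]
        simp [Function.update]
        omega
      · refine losing_h1 _ (by simp [Function.update]) ?_
        simp [Function.update]
    · -- move at C: set edge 1 to 0 and edge 2 to w0 ^^^ w3
      have hlt : w 2 ^^^ (w 0 ^^^ w 2 ^^^ w 3) < w 2 := xor_log2_lt hne hb
      rw [xor3_c] at hlt
      refine ⟨Function.update (Function.update w 1 0) 2 (w 0 ^^^ w 3), ⟨2, ?_, ?_, ?_⟩, ?_⟩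
      · intro e
        fin_cases e <;> simp [Function.update] <;> omega
      · intro e he
        fin_cases e
        · simp [Function.update]
        · exact absurd (by decide : h1Inc 2 1) he
        · exact absurd (by decide : h1Inc 2 2) he
        · simp [Function.update]
      · rw [Fin.sum_univ_four, Fin.sum_univ_four]
        simp [Function.update]
        omega
      · refine losing_h1 _ (by simp [Function.update]) ?_
        simp [Function.update]
  · rintro ⟨h1pos, hx⟩
    refine ⟨Function.update w 1 0, ⟨1, ?_, ?_, ?_⟩, ?_⟩
    · intro e
      fin_cases e <;> simp [Function.update]
    · intro e he
      fin_cases e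
      · exact absurd (by decide : h1Inc 1 0) he
      · exact absurd (by decide : h1Inc 1 1) he
      · simp [Function.update]
      · simp [Function.update]
    · rw [Fin.sum_univ_four, Fin.sum_univ_four]
      simp [Function.update]
      omega
    · apply losing_h1 <;> simp [Function.update, hx]
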